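/- arXiv:1201.6682 — 3 statements merged into one kernel-verified Lean document; each statement's English description precedes it below -/
import Mathlib

section
/- The arc length of the quarter ellipse with semiaxes a > 0 and b > 0 equals (1/(2√2)) · ∫_{-1}^{1} √((a² + b² - (a² - b²)z)/(1 - z²)) dz. -/
open Real Set MeasureTheory intervalIntegral

/-- The arc length of the quarter ellipse `{(x,y) : x²/a² + y²/b² = 1, x ≥ 0, y ≥ 0}`,
computed via the standard parametrization `θ ↦ (a cos θ, b sin θ)`, `θ ∈ [0, π/2]`. -/
noncomputable def quarterEllipsePerimeter (a b : ℝ) : ℝ :=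
  ∫ θ in (0:ℝ)..(Real.pi / 2),
    Real.sqrt ((a * Real.sin θ) ^ 2 + (b * Real.cos θ) ^ 2)

theorem euler_quarter_ellipse_integral (a b : ℝ) (ha : 0 < a) (hb : 0 < b) :
    quarterEllipsePerimeter a b =
      (1 / (2 * Real.sqrt 2)) *
        ∫ z in (-1:ℝ)..1,
          Real.sqrt ((a ^ 2 + b ^ 2 - (a ^ 2 - b ^ 2) * z) / (1 - z ^ 2)) := by
  have hA : (0:ℝ) < a ^ 2 + b ^ 2 := by positivity
  have hB : |a ^ 2 - b ^ 2| < a ^ 2 + b ^ 2 := by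
    rw [abs_lt]; constructor <;> nlinarith
  set g : ℝ → ℝ := fun z => Real.sqrt ((a ^ 2 + b ^ 2 - (a ^ 2 - b ^ 2) * z) / (1 - z ^ 2))
    with hg_def
  set F : ℝ → ℝ := fun θ => Real.sqrt ((a * Real.sin θ) ^ 2 + (b * Real.cos θ) ^ 2) with hF_def
  have hπ : (0:ℝ) < Real.pi / 2 := by positivity
  -- numerator bounds on [-1,1]
  have hnum : ∀ z : ℝ, z ∈ Icc (-1:ℝ) 1 → a ^ 2 + b ^ 2 - (a ^ 2 - b ^ 2) * z ∈
      Icc (0:ℝ) (2 * (a ^ 2 + b ^ 2)) := by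
    intro z hz
    have h1 : |(a ^ 2 - b ^ 2) * z| ≤ |a ^ 2 - b ^ 2| := by
      rw [abs_mul]
      calc |a ^ 2 - b ^ 2| * |z| ≤ |a ^ 2 - b ^ 2| * 1 :=
            mul_le_mul_of_nonneg_left (abs_le.mpr ⟨hz.1, hz.2⟩) (abs_nonneg _)
        _ = |a ^ 2 - b ^ 2| := mul_one _
    have h2 := abs_le.mp h1
    constructor <;> [linarith; linarith]
  -- 1/sqrt(1-z^2) is integrable on (-1,1] as the nonneg derivative of arcsin
  have hint0 : IntegrableOn (fun z : ℝ => 1 / Real.sqrt (1 - z ^ 2)) (Ioc (-1:ℝ) 1) := by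
    apply intervalIntegral.integrableOn_deriv_of_nonneg
      (g := Real.arcsin) Real.continuous_arcsin.continuousOn
    · intro x hx
      exact Real.hasDerivAt_arcsin (ne_of_gt hx.1) (ne_of_lt hx.2)
    · intro x hx; positivity
  -- g is integrable on Icc (-1) 1
  have hgmeas : Measurable g := by
    rw [hg_def]; fun_prop
  have hg1 : IntegrableOn g (Icc (-1:ℝ) 1) := by
    rw [integrableOn_Icc_iff_integrableOn_Ioc]
    apply Integrable.mono' (hint0.const_mul (Real.sqrt (2 * (a ^ 2 + b ^ 2))))
      hgmeas.aestronglyMeasurable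
    filter_upwards [ae_restrict_mem measurableSet_Ioc] with z hz
    rw [Real.norm_of_nonneg (Real.sqrt_nonneg _)]
    rcases eq_or_lt_of_le hz.2 with h1 | h1
    · subst h1
      norm_num
    · have hden : 0 < 1 - z ^ 2 := by nlinarith [hz.1]
      have hzIcc : z ∈ Icc (-1:ℝ) 1 := ⟨hz.1.le, hz.2⟩
      calc g z ≤ Real.sqrt ((2 * (a ^ 2 + b ^ 2)) / (1 - z ^ 2)) := by
            apply Real.sqrt_le_sqrt
            gcongr
            exact (hnum z hzIcc).2
        _ = Real.sqrt (2 * (a ^ 2 + b ^ 2)) * (1 / Real.sqrt (1 - z ^ 2)) := by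
            rw [Real.sqrt_div (by positivity), mul_one_div]
  -- continuity of g on the open interval
  have hgcont : ContinuousOn g (Ioo (-1:ℝ) 1) := by
    apply Real.continuous_sqrt.comp_continuousOn
    apply ContinuousOn.div
    · fun_prop
    · fun_prop
    · intro z hz
      nlinarith [hz.1, hz.2]
  -- the substitution function
  set f : ℝ → ℝ := fun θ => Real.cos (2 * θ) with hf_def
  have hfderiv : ∀ x : ℝ, HasDerivAt f (-2 * Real.sin (2 * x)) x := by
    intro x
    have h := (Real.hasDerivAt_cos (2 * x)).comp x ((hasDerivAt_id x).const_mul 2)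
    simpa [mul_comm, hf_def, Function.comp_def] using h
  have hmaps : ∀ x ∈ Ioo (0:ℝ) (Real.pi / 2), f x ∈ Ioo (-1:ℝ) 1 := by
    intro x hx
    constructor
    · have := Real.cos_lt_cos_of_nonneg_of_le_pi (by linarith [hx.1] : (0:ℝ) ≤ 2 * x)
        (le_refl Real.pi) (by linarith [hx.2])
      simpa [Real.cos_pi] using this
    · have := Real.cos_lt_cos_of_nonneg_of_le_pi (le_refl (0:ℝ))
        (by linarith [hx.2, Real.pi_pos] : 2 * x ≤ Real.pi) (by linarith [hx.1])
      simpa [Real.cos_zero] using this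
  -- pointwise identity on (0, π/2)
  have hkey : ∀ x ∈ Ioo (0:ℝ) (Real.pi / 2),
      (-2 * Real.sin (2 * x)) • g (f x) = -(2 * Real.sqrt 2) * F x := by
    intro x hx
    have hs : 0 < Real.sin (2 * x) :=
      Real.sin_pos_of_pos_of_lt_pi (by linarith [hx.1]) (by linarith [hx.2])
    have hcs : 1 - Real.cos (2 * x) ^ 2 = Real.sin (2 * x) ^ 2 := by
      nlinarith [Real.sin_sq_add_cos_sq (2 * x)]
    have hnum2 : a ^ 2 + b ^ 2 - (a ^ 2 - b ^ 2) * Real.cos (2 * x)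
        = 2 * ((a * Real.sin x) ^ 2 + (b * Real.cos x) ^ 2) := by
      rw [Real.cos_two_mul]
      nlinarith [Real.sin_sq_add_cos_sq x]
    have : g (f x) = Real.sqrt 2 * F x / Real.sin (2 * x) := by
      rw [hg_def]
      simp only [hf_def]
      rw [hcs, hnum2, Real.sqrt_div (by positivity), Real.sqrt_sq hs.le,
        Real.sqrt_mul (by norm_num : (0:ℝ) ≤ 2)]
    rw [this, smul_eq_mul]
    field_simp
  -- change of variables
  have hsub := intervalIntegral.integral_comp_smul_deriv''' (a := (0:ℝ)) (b := Real.pi / 2)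
    (f := f) (f' := fun x => -2 * Real.sin (2 * x)) (g := g)
    (by fun_prop)
    (by
      intro x hx
      exact (hfderiv x).hasDerivWithinAt)
    (by
      apply hgcont.mono
      rintro _ ⟨x, hx, rfl⟩
      rw [min_def, max_def] at hx
      split_ifs at hx <;> [exact hmaps x hx; linarith [hπ, le_of_lt hπ]])
    (by
      apply hg1.mono_set
      rintro _ ⟨x, hx, rfl⟩
      exact ⟨Real.neg_one_le_cos _, Real.cos_le_one _⟩)
    (by
      rw [uIcc_of_le hπ.le, integrableOn_Icc_iff_integrableOn_Ioo]
      have hFint : IntegrableOn (fun x => -(2 * Real.sqrt 2) * F x)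
          (Ioo (0:ℝ) (Real.pi / 2)) :=
        ((continuous_const.mul (by rw [hF_def]; fun_prop : Continuous F)).integrableOn_Icc).mono_set
          Ioo_subset_Icc_self
      apply Integrable.congr hFint
      filter_upwards [ae_restrict_mem measurableSet_Ioo] with x hx
      exact (hkey x hx).symm)
  -- compute both sides of hsub
  have hf0 : f 0 = 1 := by simp [hf_def]
  have hf1 : f (Real.pi / 2) = -1 := by
    simp [hf_def, mul_div_cancel₀]
  rw [hf0, hf1] at hsub
  have hL : (∫ x in (0:ℝ)..(Real.pi / 2), (fun x => -2 * Real.sin (2 * x)) x • (g ∘ f) x)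
      = -(2 * Real.sqrt 2) * quarterEllipsePerimeter a b := by
    rw [show quarterEllipsePerimeter a b = ∫ θ in (0:ℝ)..(Real.pi / 2), F θ from rfl,
      ← intervalIntegral.integral_const_mul]
    apply intervalIntegral.integral_congr_ae
    have hnull : ∀ᵐ x : ℝ, x ∉ ({0, Real.pi / 2} : Set ℝ) := by
      rw [MeasureTheory.ae_iff]
      push_neg
      exact measure_mono_null (by intro x hx; simpa using hx)
        (((Set.finite_singleton (Real.pi / 2)).insert 0).measure_zero volume)
    filter_upwards [hnull] with x hx hmem
    rw [uIoc_of_le hπ.le] at hmem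
    have hx0 : x ≠ 0 := fun h => hx (by simp [h])
    have hx1 : x ≠ Real.pi / 2 := fun h => hx (by simp [h])
    exact hkey x ⟨lt_of_le_of_ne hmem.1.le (Ne.symm hx0), lt_of_le_of_ne hmem.2 hx1⟩
  have hR : (∫ u in (1:ℝ)..(-1), g u) = -(∫ z in (-1:ℝ)..1, g z) :=
    intervalIntegral.integral_symm _ _
  rw [hL, hR] at hsub
  have h2s : (0:ℝ) < 2 * Real.sqrt 2 := by positivity
  rw [hg_def] at hsub
  field_simp
  linarith [hsub]
end

section
/- For |n| < 1, the quarter perimeter of the ellipse with semiaxes a = c√((1+n)/2) and b = c√((1-n)/2), where c > 0 and c² = a² + b², equals (cπ/(2√2)) · (1 - ∑_{k=1}^{∞} α_k n^{2k}), where α_1 = 1/16 and α_{k+1}/α_k = ((4k-1)(4k+1))/((4k+4)²) for k ≥ 1. -/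
/-- Euler's coefficients: `α 1 = 1/16`, `α (k+1) = α k · ((4k-1)(4k+1))/((4k+4)²)`. -/
noncomputable def eulerAlpha : ℕ → ℝ
  | 0 => 0
  | 1 => 1 / 16
  | (k + 2) =>
      eulerAlpha (k + 1) *
        ((4 * (k + 1 : ℝ) - 1) * (4 * (k + 1 : ℝ) + 1)) / ((4 * (k + 1 : ℝ) + 4) ^ 2)

open Real Finset

/-- Wallis product `∏_{i<m} (2i+1)/(2i+2)`. -/
noncomputable def wP (m : ℕ) : ℝ := ∏ i ∈ Finset.range m, (2*(i:ℝ)+1)/(2*i+2)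

/-- Coefficients of the power series of `√(1-x)`. -/
noncomputable def eB : ℕ → ℝ
  | 0 => 1
  | (k+1) => -(wP k) / (2*(k:ℝ)+2)

lemma wP_zero : wP 0 = 1 := by simp [wP]

lemma wP_succ (m : ℕ) : wP (m+1) = wP m * ((2*(m:ℝ)+1)/(2*m+2)) := by
  rw [wP, wP, Finset.prod_range_succ]

lemma wP_nonneg (m : ℕ) : 0 ≤ wP m := by
  refine Finset.prod_nonneg fun i _ => ?_
  positivity

lemma wP_le_one (m : ℕ) : wP m ≤ 1 := by
  refine Finset.prod_le_one (fun i _ => by positivity) fun i _ => ?_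
  rw [div_le_one (by positivity)]
  linarith

lemma eB_zero : eB 0 = 1 := rfl
lemma eB_succ (k : ℕ) : eB (k+1) = -(wP k) / (2*(k:ℝ)+2) := rfl

lemma eB_rec (k : ℕ) : eB (k+1) = eB k * ((2*(k:ℝ)-1)/(2*k+2)) := by
  cases k with
  | zero => rw [eB_succ, eB_zero, wP_zero]; norm_num
  | succ m =>
    rw [eB_succ, eB_succ, wP_succ]
    have h1 : (2*(m:ℝ)+2) ≠ 0 := by positivity
    have h2 : (2*((m:ℝ)+1)+2) ≠ 0 := by positivity
    push_cast
    field_simp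
    try ring_nf
    try exact Or.inl trivial

lemma abs_eB_le_one (k : ℕ) : |eB k| ≤ 1 := by
  cases k with
  | zero => simp [eB_zero]
  | succ m =>
    rw [eB_succ, abs_div, abs_neg, abs_of_nonneg (wP_nonneg m),
      abs_of_pos (by positivity : (0:ℝ) < 2*(m:ℝ)+2)]
    rw [div_le_one (by positivity)]
    have := wP_le_one m
    linarith

lemma wP_centralBinom (m : ℕ) : wP m = (Nat.centralBinom m : ℝ) / 4^m := by
  induction m with
  | zero => simp [wP_zero, Nat.centralBinom]
  | succ k ih =>
    rw [wP_succ, ih]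
    have h := Nat.succ_mul_centralBinom_succ k
    have h' : ((k:ℝ)+1) * (Nat.centralBinom (k+1) : ℝ) = 2 * (2*k+1) * Nat.centralBinom k := by
      exact_mod_cast congrArg (Nat.cast : ℕ → ℝ) h
    have hk : ((k:ℝ)+1) ≠ 0 := by positivity
    have h4 : (4:ℝ)^k ≠ 0 := by positivity
    field_simp
    push_cast
    rw [pow_succ]
    linear_combination (-2*(4:ℝ)^k) * h'

lemma eB_catalan (k : ℕ) : eB (k+1) = -(catalan k : ℝ) / (2 * 4^k) := by
  rw [eB_succ, wP_centralBinom]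
  have h : catalan k * (k+1) = Nat.centralBinom k := by
    rw [catalan_eq_centralBinom_div]; exact Nat.div_mul_cancel (Nat.succ_dvd_centralBinom k)
  have h' : ((k:ℝ)+1) * (catalan k : ℝ) = Nat.centralBinom k := by
    push_cast [← h]; ring
  have hk : ((k:ℝ)+1) ≠ 0 := by positivity
  have h4 : (4:ℝ)^k ≠ 0 := by positivity
  rw [← h']
  field_simp

lemma catalan_cast_succ (m : ℕ) :
    ((catalan (m+1) : ℝ)) = ∑ i ∈ Finset.range (m+1), (catalan i : ℝ) * (catalan (m-i) : ℝ) := by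
  rw [catalan_succ' m, Finset.Nat.sum_antidiagonal_eq_sum_range_succ_mk]
  push_cast
  rfl

lemma eB_conv (m : ℕ) :
    ∑ kl ∈ Finset.HasAntidiagonal.antidiagonal (m+2), eB kl.1 * eB kl.2 = 0 := by
  rw [Finset.Nat.sum_antidiagonal_eq_sum_range_succ_mk]
  rw [Finset.sum_range_succ', Finset.sum_range_succ]
  have hmid : ∀ i ∈ Finset.range (m+1),
      eB (i+1) * eB (m+2-(i+1)) = (catalan i : ℝ) * (catalan (m-i) : ℝ) / (4 * 4^m) := by
    intro i hi
    rw [Finset.mem_range] at hi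
    have h1 : m + 2 - (i+1) = (m - i) + 1 := by omega
    rw [h1, eB_catalan, eB_catalan]
    have h2 : (4:ℝ)^i * 4^(m-i) = 4^m := by
      rw [← pow_add]; congr 1; omega
    rw [div_mul_div_comm, ← h2]
    have hi4 : (4:ℝ)^i ≠ 0 := by positivity
    have hmi4 : (4:ℝ)^(m-i) ≠ 0 := by positivity
    field_simp
    try ring_nf
    try exact Or.inl trivial
  simp only [Nat.sub_zero]
  rw [Finset.sum_congr rfl hmid, ← Finset.sum_div, ← catalan_cast_succ]
  have h3 : m + 2 - (m + 1 + 1) = 0 := by omega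
  rw [h3, eB_catalan, eB_zero, pow_succ]
  have h4 : (4:ℝ)^m ≠ 0 := by positivity
  field_simp
  ring

lemma summable_eB_norm {x : ℝ} (hx : |x| < 1) : Summable (fun k => ‖eB k * x^k‖) := by
  refine Summable.of_nonneg_of_le (fun k => norm_nonneg _) (fun k => ?_)
    (summable_geometric_of_lt_one (abs_nonneg x) hx)
  rw [Real.norm_eq_abs, abs_mul, abs_pow]
  calc |eB k| * |x|^k ≤ 1 * |x|^k := by gcongr; exact abs_eB_le_one k
    _ = |x|^k := one_mul _

lemma summable_eB {x : ℝ} (hx : |x| < 1) : Summable (fun k => eB k * x^k) :=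
  (summable_eB_norm hx).of_norm

lemma eB_one : eB 1 = -(1/2) := by
  rw [eB_succ, wP_zero]; norm_num

lemma eB_sq (x : ℝ) (hx : |x| < 1) :
    (∑' k, eB k * x^k) * (∑' k, eB k * x^k) = 1 - x := by
  rw [tsum_mul_tsum_eq_tsum_sum_antidiagonal_of_summable_norm
    (summable_eB_norm hx) (summable_eB_norm hx)]
  have hterm : ∀ n, (∑ kl ∈ Finset.HasAntidiagonal.antidiagonal n, (eB kl.1 * x^kl.1) * (eB kl.2 * x^kl.2))
      = (∑ kl ∈ Finset.HasAntidiagonal.antidiagonal n, eB kl.1 * eB kl.2) * x^n := by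
    intro n
    rw [Finset.sum_mul]
    refine Finset.sum_congr rfl fun kl hkl => ?_
    rw [Finset.HasAntidiagonal.mem_antidiagonal] at hkl
    rw [← hkl, pow_add]; ring
  rw [tsum_congr hterm]
  rw [tsum_eq_sum (s := {0, 1}) ?h]
  case h =>
    intro n hn
    have : ∃ m, n = m + 2 := by
      simp only [Finset.mem_insert, Finset.mem_singleton] at hn
      exact ⟨n - 2, by omega⟩
    obtain ⟨m, rfl⟩ := this
    rw [eB_conv m, zero_mul]
  rw [Finset.sum_insert (by norm_num), Finset.sum_singleton]
  rw [Finset.Nat.antidiagonal_zero]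
  rw [show Finset.HasAntidiagonal.antidiagonal 1 = {(0,1),(1,0)} from rfl]
  rw [Finset.sum_singleton, Finset.sum_insert (by norm_num), Finset.sum_singleton]
  simp [eB_zero, eB_one]
  ring

lemma abs_eB_succ (k : ℕ) : |eB (k+1)| = wP k - wP (k+1) := by
  rw [eB_succ, abs_div, abs_neg, abs_of_nonneg (wP_nonneg k),
    abs_of_pos (by positivity : (0:ℝ) < 2*(k:ℝ)+2), wP_succ]
  have h : (2*(k:ℝ)+2) ≠ 0 := by positivity
  field_simp
  ring

lemma summable_abs_eB_tail : Summable (fun k => |eB (k+1)|) := by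
  refine summable_of_sum_range_le (fun k => abs_nonneg _) (fun n => ?_) (c := 1)
  calc ∑ i ∈ Finset.range n, |eB (i+1)| = ∑ i ∈ Finset.range n, (wP i - wP (i+1)) :=
        Finset.sum_congr rfl fun i _ => abs_eB_succ i
    _ = wP 0 - wP n := Finset.sum_range_sub' wP n
    _ ≤ 1 := by rw [wP_zero]; linarith [wP_nonneg n]

lemma tsum_abs_eB_tail_le : (∑' k, |eB (k+1)|) ≤ 1 := by
  refine tsum_le_of_sum_range_le (fun k => abs_nonneg _) (fun n => ?_)
  calc ∑ i ∈ Finset.range n, |eB (i+1)| = ∑ i ∈ Finset.range n, (wP i - wP (i+1)) :=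
        Finset.sum_congr rfl fun i _ => abs_eB_succ i
    _ = wP 0 - wP n := Finset.sum_range_sub' wP n
    _ ≤ 1 := by rw [wP_zero]; linarith [wP_nonneg n]

lemma eB_tsum_nonneg (x : ℝ) (hx : |x| < 1) : 0 ≤ ∑' k, eB k * x^k := by
  have hsum := summable_eB hx
  rw [hsum.tsum_eq_zero_add]
  rw [eB_zero, pow_zero, mul_one]
  have htail : Summable (fun k => ‖eB (k+1) * x^(k+1)‖) :=
    (summable_nat_add_iff 1).mpr (summable_eB_norm hx)
  have h1 : |∑' k, eB (k+1) * x^(k+1)| ≤ 1 := by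
    calc |∑' k, eB (k+1) * x^(k+1)| ≤ ∑' k, ‖eB (k+1) * x^(k+1)‖ := by
          rw [← Real.norm_eq_abs]; exact norm_tsum_le_tsum_norm htail
      _ ≤ ∑' k, |eB (k+1)| := by
          refine Summable.tsum_le_tsum (fun k => ?_) htail summable_abs_eB_tail
          rw [Real.norm_eq_abs, abs_mul, abs_pow]
          have hp : |x|^(k+1) ≤ 1 := pow_le_one₀ (abs_nonneg x) hx.le
          calc |eB (k+1)| * |x|^(k+1) ≤ |eB (k+1)| * 1 :=
                mul_le_mul_of_nonneg_left hp (abs_nonneg _)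
            _ = |eB (k+1)| := mul_one _
      _ ≤ 1 := tsum_abs_eB_tail_le
  linarith [(abs_le.mp h1).1]

lemma hasSum_sqrt_one_sub {x : ℝ} (hx : |x| < 1) :
    HasSum (fun k => eB k * x^k) (Real.sqrt (1 - x)) := by
  have hsum := summable_eB hx
  have : Real.sqrt (1 - x) = ∑' k, eB k * x^k := by
    rw [← eB_sq x hx, ← pow_two, Real.sqrt_sq (eB_tsum_nonneg x hx)]
  rw [this]
  exact hsum.hasSum

lemma integral_cos_two_mul_pow (k : ℕ) :
    (∫ θ in (0:ℝ)..(π/2), Real.cos (2*θ)^k) = (2:ℝ)⁻¹ * ∫ x in (0:ℝ)..π, Real.cos x ^ k := by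
  have h := intervalIntegral.integral_comp_mul_left (a := 0) (b := π/2)
    (fun x => Real.cos x ^ k) (c := 2) two_ne_zero
  simp only [mul_zero] at h
  rw [show (2:ℝ) * (π/2) = π by ring] at h
  rw [h, smul_eq_mul]

lemma integral_cos_pow_odd_pi (m : ℕ) : (∫ x in (0:ℝ)..π, Real.cos x ^ (2*m+1)) = 0 := by
  have h := intervalIntegral.integral_comp_sub_left (a := 0) (b := π)
    (fun x => Real.cos x ^ (2*m+1)) π
  simp only [sub_zero, sub_self] at h
  have h2 : ∀ x : ℝ, Real.cos (π - x) ^ (2*m+1) = -(Real.cos x ^ (2*m+1)) := by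
    intro x; rw [Real.cos_pi_sub, Odd.neg_pow (odd_two_mul_add_one m)]
  simp only [h2] at h
  rw [intervalIntegral.integral_neg] at h
  linarith

lemma integral_cos_pow_even_pi (m : ℕ) :
    (∫ x in (0:ℝ)..π, Real.cos x ^ (2*m)) = π * wP m := by
  have hper : Function.Periodic (fun x => Real.cos x ^ (2*m)) π := by
    intro x
    simp only
    rw [Real.cos_add_pi, Even.neg_pow (even_two_mul m)]
  have h1 := hper.intervalIntegral_add_eq (-(π/2)) 0
  rw [show -(π/2) + π = π/2 by ring, show (0:ℝ) + π = π by ring] at h1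
  have h2 := intervalIntegral.integral_comp_sub_right (a := 0) (b := π)
    (fun x => Real.cos x ^ (2*m)) (π/2)
  rw [show (0:ℝ) - π/2 = -(π/2) by ring, show π - π/2 = π/2 by ring] at h2
  have h3 : ∀ x : ℝ, Real.cos (x - π/2) ^ (2*m) = Real.sin x ^ (2*m) := by
    intro x
    rw [show x - π/2 = -(π/2 - x) by ring, Real.cos_neg, Real.cos_pi_div_two_sub]
  simp only [h3] at h2
  have h4 := integral_sin_pow_even (n := m)
  rw [← h1, ← h2, h4, wP]

open MeasureTheory in
lemma hasSum_integral_series {n : ℝ} (hn : |n| < 1) :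
    HasSum (fun k => eB k * n^k * ∫ θ in (0:ℝ)..(π/2), Real.cos (2*θ)^k)
      (∫ θ in (0:ℝ)..(π/2), Real.sqrt (1 - n * Real.cos (2*θ))) := by
  have hle : (0:ℝ) ≤ π/2 := by positivity
  set μ := volume.restrict (Set.Ioc (0:ℝ) (π/2)) with hμ
  have hF_int : ∀ k : ℕ, Integrable (fun θ => eB k * (n * Real.cos (2*θ))^k) μ := by
    intro k
    have hc : Continuous fun θ : ℝ => eB k * (n * Real.cos (2*θ))^k := by continuity
    exact hc.integrableOn_Ioc
  have hptbd : ∀ (k : ℕ) (θ : ℝ), ‖eB k * (n * Real.cos (2*θ))^k‖ ≤ |n|^k := by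
    intro k θ
    rw [Real.norm_eq_abs, abs_mul, abs_pow, abs_mul]
    have h1 : |n| * |Real.cos (2*θ)| ≤ |n| :=
      mul_le_of_le_one_right (abs_nonneg n) (Real.abs_cos_le_one _)
    calc |eB k| * (|n| * |Real.cos (2*θ)|)^k ≤ 1 * |n|^k := by
          refine mul_le_mul (abs_eB_le_one k) (pow_le_pow_left₀ (by positivity) h1 k)
            (by positivity) one_pos.le
      _ = |n|^k := one_mul _
  have hmeas : μ.real Set.univ = π/2 := by
    rw [measureReal_def, hμ, Measure.restrict_apply_univ, Real.volume_Ioc]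
    rw [ENNReal.toReal_ofReal (by linarith)]
    ring
  have hF_bd : ∀ k : ℕ, (∫ θ, ‖eB k * (n * Real.cos (2*θ))^k‖ ∂μ) ≤ |n|^k * (π/2) := by
    intro k
    calc (∫ θ, ‖eB k * (n * Real.cos (2*θ))^k‖ ∂μ) ≤ ∫ _, |n|^k ∂μ :=
          integral_mono_of_nonneg (Filter.Eventually.of_forall fun θ => norm_nonneg _)
            (integrable_const _) (Filter.Eventually.of_forall fun θ => hptbd k θ)
      _ = |n|^k * (π/2) := by rw [integral_const, smul_eq_mul, hmeas, mul_comm]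
  have hF_sum : Summable fun k => ∫ θ, ‖eB k * (n * Real.cos (2*θ))^k‖ ∂μ := by
    refine Summable.of_nonneg_of_le
      (fun k => integral_nonneg fun θ => norm_nonneg _) hF_bd ?_
    exact (summable_geometric_of_lt_one (abs_nonneg n) hn).mul_right _
  have key := MeasureTheory.hasSum_integral_of_summable_integral_norm hF_int hF_sum
  have hpt : ∀ θ : ℝ, (∑' k, eB k * (n * Real.cos (2*θ))^k) = Real.sqrt (1 - n * Real.cos (2*θ)) := by
    intro θ
    refine (hasSum_sqrt_one_sub ?_).tsum_eq
    calc |n * Real.cos (2*θ)| = |n| * |Real.cos (2*θ)| := abs_mul _ _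
      _ ≤ |n| * 1 := mul_le_mul_of_nonneg_left (Real.abs_cos_le_one _) (abs_nonneg n)
      _ = |n| := mul_one _
      _ < 1 := hn
  have e1 : ∀ k : ℕ, (∫ θ, eB k * (n * Real.cos (2*θ))^k ∂μ)
      = eB k * n^k * ∫ θ in (0:ℝ)..(π/2), Real.cos (2*θ)^k := by
    intro k
    rw [intervalIntegral.integral_of_le hle, ← hμ, ← MeasureTheory.integral_const_mul]
    congr 1
    funext θ
    rw [mul_pow]
    ring
  simp only [hpt, e1] at key
  rw [intervalIntegral.integral_of_le hle, ← hμ]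
  exact key

lemma eulerAlpha_eq (m : ℕ) : eulerAlpha (m+1) = -(eB (2*m+2) * wP (m+1)) := by
  induction m with
  | zero =>
    have h2 : wP 1 = 1/2 := by rw [wP_succ, wP_zero]; norm_num
    have h1 : eB 2 = -(1/8) := by
      rw [show (2:ℕ) = 1+1 from rfl, eB_succ, h2]; norm_num
    norm_num [h1, h2, eulerAlpha]
  | succ k ih =>
    have ha : eulerAlpha (k+1+1) = eulerAlpha (k+1) *
        ((4*((k:ℝ)+1)-1)*(4*((k:ℝ)+1)+1)) / ((4*((k:ℝ)+1)+4)^2) := by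
      show eulerAlpha (k+2) = _
      rw [eulerAlpha]
      try push_cast
      try ring
    have hidx : 2*(k+1)+2 = (2*k+3)+1 := by omega
    have hidx2 : 2*k+3 = (2*k+2)+1 := by omega
    have h2 := eB_rec (2*k+3)
    have h1 := eB_rec (2*k+2)
    rw [hidx2] at h2
    have h3 := wP_succ (k+1)
    rw [ha, ih, hidx, h2, h1, h3]
    push_cast
    have d1 : (2*(2*(k:ℝ)+2)+2) ≠ 0 := by positivity
    have d2 : (2*(2*(k:ℝ)+2+1)+2) ≠ 0 := by positivity
    have d3 : (2*((k:ℝ)+1)+2) ≠ 0 := by positivity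
    have d4 : (4*((k:ℝ)+1)+4) ≠ 0 := by positivity
    field_simp
    ring

theorem euler_series_perimeter (n c : ℝ) (hn : |n| < 1) (hc : 0 < c) :
    quarterEllipsePerimeter (c * Real.sqrt ((1 + n) / 2)) (c * Real.sqrt ((1 - n) / 2)) =
      (c * Real.pi / (2 * Real.sqrt 2)) *
        (1 - ∑' k : ℕ, eulerAlpha (k + 1) * n ^ (2 * (k + 1))) := by
  obtain ⟨hn1, hn2⟩ := abs_lt.mp hn
  have h1n : 0 ≤ (1+n)/2 := by linarith
  have h2n : 0 ≤ (1-n)/2 := by linarith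
  have hs2 : (0:ℝ) < Real.sqrt 2 := Real.sqrt_pos.mpr (by norm_num)
  -- pointwise identity for the integrand
  have hpt : ∀ θ : ℝ,
      Real.sqrt ((c * Real.sqrt ((1+n)/2) * Real.sin θ)^2 + (c * Real.sqrt ((1-n)/2) * Real.cos θ)^2)
        = (c / Real.sqrt 2) * Real.sqrt (1 - n * Real.cos (2*θ)) := by
    intro θ
    have e1 : (c * Real.sqrt ((1+n)/2) * Real.sin θ)^2 + (c * Real.sqrt ((1-n)/2) * Real.cos θ)^2
        = (c/Real.sqrt 2)^2 * (1 - n * Real.cos (2*θ)) := by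
      have c1 : (c * Real.sqrt ((1+n)/2) * Real.sin θ)^2 + (c * Real.sqrt ((1-n)/2) * Real.cos θ)^2
          = c^2*((1+n)/2)*Real.sin θ^2 + c^2*((1-n)/2)*Real.cos θ^2 := by
        simp only [mul_pow]
        rw [Real.sq_sqrt h1n, Real.sq_sqrt h2n]
      have c2 : c^2*((1+n)/2)*Real.sin θ^2 + c^2*((1-n)/2)*Real.cos θ^2
          = c^2/2 * (1 - n * Real.cos (2*θ)) := by
        rw [Real.cos_two_mul, Real.sin_sq]
        ring
      have c3 : (c/Real.sqrt 2)^2 = c^2/2 := by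
        rw [div_pow, Real.sq_sqrt (by norm_num : (0:ℝ) ≤ 2)]
      rw [c1, c2, c3]
    rw [e1, Real.sqrt_mul (sq_nonneg _), Real.sqrt_sq (by positivity : (0:ℝ) ≤ c/Real.sqrt 2)]
  unfold quarterEllipsePerimeter
  rw [intervalIntegral.integral_congr
    (g := fun θ => (c/Real.sqrt 2) * Real.sqrt (1 - n * Real.cos (2*θ))) (fun θ _ => hpt θ)]
  rw [intervalIntegral.integral_const_mul]
  set S := ∫ θ in (0:ℝ)..(π/2), Real.sqrt (1 - n * Real.cos (2*θ)) with hS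
  -- the series for S
  have hsum := hasSum_integral_series hn
  rw [← hS] at hsum
  set g : ℕ → ℝ := fun k => eB k * n^k * ∫ θ in (0:ℝ)..(π/2), Real.cos (2*θ)^k with hg
  have hodd : ∀ k ∉ Set.range (fun m : ℕ => 2*m), g k = 0 := by
    intro k hk
    have hex : ∃ m, k = 2*m+1 := by
      rcases Nat.even_or_odd k with he | ho
      · obtain ⟨j, hj⟩ := he
        exact absurd ⟨j, by show 2*j = k; omega⟩ hk
      · obtain ⟨j, hj⟩ := ho
        exact ⟨j, by omega⟩
    obtain ⟨m, rfl⟩ := hex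
    rw [hg]
    simp only
    rw [integral_cos_two_mul_pow, integral_cos_pow_odd_pi]
    ring
  have hinj : Function.Injective (fun m : ℕ => 2*m) := fun a b h => by
    simpa using h
  have heven : HasSum (fun m : ℕ => g (2*m)) S :=
    (Function.Injective.hasSum_iff hinj hodd).mpr hsum
  have hg0 : g (2*0) = π/2 := by
    rw [hg]
    simp only
    rw [integral_cos_two_mul_pow]
    norm_num
    rw [eB_zero]
    ring
  have htail : HasSum (fun m : ℕ => g (2*(m+1))) (S - π/2) := by
    refine (hasSum_nat_add_iff (f := fun m : ℕ => g (2*m)) 1).mpr ?_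
    have hg0' : g 0 = π/2 := hg0
    simpa [Finset.sum_range_one, hg0'] using heven
  have hterm : ∀ m : ℕ, g (2*(m+1)) = -((π/2) * (eulerAlpha (m+1) * n^(2*(m+1)))) := by
    intro m
    rw [hg]
    simp only
    rw [integral_cos_two_mul_pow, integral_cos_pow_even_pi (m+1)]
    rw [show 2*(m+1) = 2*m+2 from by omega, eulerAlpha_eq m]
    ring
  simp only [hterm] at htail
  have hπ : (π:ℝ) ≠ 0 := Real.pi_ne_zero
  have h4 := htail.mul_left (-(2/π))
  have hfn : ∀ m : ℕ, -(2/π) * (-((π/2) * (eulerAlpha (m+1) * n^(2*(m+1)))))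
      = eulerAlpha (m+1) * n^(2*(m+1)) := by
    intro m; field_simp
  have h5 : HasSum (fun m : ℕ => eulerAlpha (m+1) * n^(2*(m+1))) (-(2/π)*(S - π/2)) := by
    simpa only [hfn] using h4
  rw [h5.tsum_eq]
  field_simp
  ring
end

section
/- The series 1 - ∑_{k=1}^{∞} α_k, where α_1 = 1/16 and α_{k+1} = α_k · ((4k-1)(4k+1))/((4k+4)²), converges and its sum equals 2√2/π. -/
lemma eulerAlpha_pos : ∀ k : ℕ, 0 < eulerAlpha (k + 1) := by
  intro k
  induction k with
  | zero => norm_num [eulerAlpha]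
  | succ n ih =>
    show 0 < eulerAlpha (n + 2)
    rw [eulerAlpha]
    have hn : (0:ℝ) ≤ (n:ℝ) := Nat.cast_nonneg n
    have h1 : (0:ℝ) < 4 * (n + 1 : ℝ) - 1 := by linarith
    have h2 : (0:ℝ) < 4 * (n + 1 : ℝ) + 1 := by positivity
    have h3 : (0:ℝ) < (4 * (n + 1 : ℝ) + 4) ^ 2 := by positivity
    positivity

lemma eulerAlpha_prod (N : ℕ) :
    16 * ((N : ℝ) + 1) ^ 2 * eulerAlpha (N + 1)
      = ∏ j ∈ Finset.range N, ((1 : ℝ) - (1/4 : ℝ) ^ 2 / ((j : ℝ) + 1) ^ 2) := by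
  induction N with
  | zero => norm_num [eulerAlpha]
  | succ n ih =>
    rw [Finset.prod_range_succ, ← ih]
    simp only [show n + 1 + 1 = n + 2 from rfl]
    rw [eulerAlpha]
    push_cast
    have h : ((n : ℝ) + 1) ≠ 0 := by positivity
    have h2 : (4 * ((n : ℝ) + 1) + 4) ^ 2 ≠ 0 := by positivity
    field_simp
    ring

lemma eulerAlpha_partial (N : ℕ) :
    ∑ k ∈ Finset.range N, eulerAlpha (k + 1)
      = 1 - 16 * ((N : ℝ) + 1) ^ 2 * eulerAlpha (N + 1) := by
  induction N with
  | zero => norm_num [eulerAlpha]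
  | succ n ih =>
    rw [Finset.sum_range_succ, ih]
    simp only [show n + 1 + 1 = n + 2 from rfl]
    have key : 16 * ((n : ℝ) + 1 + 1) ^ 2 * eulerAlpha (n + 2)
        = 16 * ((n : ℝ) + 1) ^ 2 * eulerAlpha (n + 1) - eulerAlpha (n + 1) := by
      rw [eulerAlpha]
      have h2 : (4 * ((n : ℝ) + 1) + 4) ^ 2 ≠ 0 := by positivity
      field_simp
      ring
    push_cast
    rw [key]
    ring

theorem euler_degenerate_sum :
    HasSum (fun k : ℕ => eulerAlpha (k + 1)) (1 - 2 * Real.sqrt 2 / Real.pi) := by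
  rw [hasSum_iff_tendsto_nat_of_nonneg (fun k => (eulerAlpha_pos k).le)]
  have hπ : Real.pi ≠ 0 := Real.pi_ne_zero
  -- Euler sine product at x = 1/4
  have h := Real.tendsto_euler_sin_prod (1/4)
  have hsin : Real.sin (Real.pi * (1/4)) = Real.sqrt 2 / 2 := by
    rw [mul_one_div, Real.sin_pi_div_four]
  rw [hsin] at h
  have h4 : Filter.Tendsto
      (fun n : ℕ => ∏ j ∈ Finset.range n, ((1 : ℝ) - (1/4:ℝ) ^ 2 / ((j : ℝ) + 1) ^ 2))
      Filter.atTop (nhds (2 * Real.sqrt 2 / Real.pi)) := by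
    have := h.const_mul (4 / Real.pi)
    have heq : ∀ n : ℕ, (4 / Real.pi) *
        (Real.pi * (1/4) * ∏ j ∈ Finset.range n, ((1 : ℝ) - (1/4:ℝ) ^ 2 / ((j : ℝ) + 1) ^ 2))
        = ∏ j ∈ Finset.range n, ((1 : ℝ) - (1/4:ℝ) ^ 2 / ((j : ℝ) + 1) ^ 2) := by
      intro n; field_simp
    have hval : (4 / Real.pi) * (Real.sqrt 2 / 2) = 2 * Real.sqrt 2 / Real.pi := by
      field_simp; ring
    rw [hval] at this
    exact this.congr heq
  have key : Filter.Tendsto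
      (fun n : ℕ => ∑ k ∈ Finset.range n, eulerAlpha (k + 1))
      Filter.atTop (nhds (1 - 2 * Real.sqrt 2 / Real.pi)) := by
    have := (tendsto_const_nhds (x := (1:ℝ))).sub h4
    refine this.congr fun n => ?_
    rw [eulerAlpha_partial, eulerAlpha_prod]
  exact key
end
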